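/- Let τ ≥ 8e and 0 < Z ≤ 1/e with ln(1/Z) ≤ τ/16. Then for every x with 0 ≤ x ≤ τ, the second derivative of g̃_{τ,Z} satisfies g̃″_{τ,Z}(x) ≤ (1/4)·g̃′_{τ,Z}(x). -/

import Mathlib

/-- erf(x) = ∫₀ˣ exp(−s²/2) ds -/
noncomputable def erf (x : ℝ) : ℝ := ∫ s in (0:ℝ)..x, Real.exp (-s^2/2)

/-- g̃_{τ,Z}(x) = √(τ/8)·Z·erf(x/√(8τ))·exp(x²/(16τ)) -/
noncomputable def gtilde (τ Z x : ℝ) : ℝ :=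
  Real.sqrt (τ/8) * Z * erf (x / Real.sqrt (8*τ)) * Real.exp (x^2/(16*τ))

lemma hasDerivAt_erf (x : ℝ) : HasDerivAt erf (Real.exp (-x^2/2)) x := by
  have hc : Continuous (fun s : ℝ => Real.exp (-s^2/2)) := by continuity
  exact (hc.integral_hasStrictDerivAt 0 x).hasDerivAt

lemma sqrt_ratio (τ : ℝ) (hτ : 0 < τ) :
    Real.sqrt (τ/8) / Real.sqrt (8*τ) = 1/8 := by
  rw [← Real.sqrt_div (by positivity)]
  rw [show τ/8/(8*τ) = (1/8:ℝ)^2 by field_simp, Real.sqrt_sq (by norm_num)]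

lemma hasDerivAt_gtilde (τ Z : ℝ) (hτ : 0 < τ) (x : ℝ) :
    HasDerivAt (gtilde τ Z) (Z/8 + x/(8*τ) * gtilde τ Z x) x := by
  set c := Real.sqrt (8*τ) with hcdef
  have hc : 0 < c := Real.sqrt_pos.2 (by linarith)
  have hc2 : c^2 = 8*τ := Real.sq_sqrt (by linarith)
  have h1 : HasDerivAt (fun y : ℝ => erf (y/c)) (Real.exp (-(x/c)^2/2) * (1/c)) x := by
    have := (hasDerivAt_erf (x/c)).comp x ((hasDerivAt_id x).div_const c)
    simpa [Function.comp_def] using this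
  have h2 : HasDerivAt (fun y : ℝ => Real.exp (y^2/(16*τ)))
      (Real.exp (x^2/(16*τ)) * (2*x/(16*τ))) x := by
    have := (((hasDerivAt_pow 2 x).div_const (16*τ)).exp)
    simpa [mul_comm] using this
  have h := ((h1.const_mul (Real.sqrt (τ/8) * Z)).mul h2)
  have key : Real.sqrt (τ/8) * Z * (Real.exp (-(x/c)^2/2) * (1/c)) * Real.exp (x^2/(16*τ))
      + Real.sqrt (τ/8) * Z * erf (x/c) * (Real.exp (x^2/(16*τ)) * (2*x/(16*τ)))
      = Z/8 + x/(8*τ) * gtilde τ Z x := by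
    have e1 : Real.exp (-(x/c)^2/2) * Real.exp (x^2/(16*τ)) = 1 := by
      rw [← Real.exp_add, ← Real.exp_zero]
      congr 1
      have : (x/c)^2 = x^2/(8*τ) := by rw [div_pow, hc2]
      rw [this]; field_simp; ring
    have e2 : Real.sqrt (τ/8) * (1/c) = 1/8 := by
      rw [mul_one_div, hcdef]
      exact sqrt_ratio τ hτ
    unfold gtilde
    rw [← hcdef]
    have lhs1 : Real.sqrt (τ/8) * Z * (Real.exp (-(x/c)^2/2) * (1/c)) * Real.exp (x^2/(16*τ))
        = Z * (Real.sqrt (τ/8) * (1/c)) * (Real.exp (-(x/c)^2/2) * Real.exp (x^2/(16*τ))) := by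
      ring
    rw [lhs1, e1, e2]
    field_simp
    ring
  rw [key] at h
  exact h
lemma erf_nonneg {t : ℝ} (ht : 0 ≤ t) : 0 ≤ erf t := by
  apply intervalIntegral.integral_nonneg ht
  intro s _; positivity

lemma erf_le {t : ℝ} (ht : 0 ≤ t) : erf t ≤ t := by
  have h : erf t ≤ ∫ s in (0:ℝ)..t, (1:ℝ) := by
    apply intervalIntegral.integral_mono_on ht
    · exact (by continuity : Continuous fun s : ℝ => Real.exp (-s^2/2)).intervalIntegrable _ _
    · exact intervalIntegrable_const
    · intro s _
      exact Real.exp_le_one_iff.2 (by nlinarith [sq_nonneg s])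
  simpa using h

theorem stmt_5 (τ Z : ℝ) (hτ : 8 * Real.exp 1 ≤ τ)
    (hZ : 0 < Z) (hZ1 : Z ≤ 1 / Real.exp 1)
    (hZτ : Real.log (1/Z) ≤ τ/16) :
    ∀ x : ℝ, 0 ≤ x → x ≤ τ →
      deriv (deriv (gtilde τ Z)) x ≤ (1/4) * deriv (gtilde τ Z) x := by
  have he : (2:ℝ) < Real.exp 1 := by
    have := Real.add_one_lt_exp (x := 1) one_ne_zero
    linarith
  have hτ0 : 0 < τ := by nlinarith
  have hd1 : deriv (gtilde τ Z) = fun x => Z/8 + x/(8*τ) * gtilde τ Z x :=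
    funext fun x => (hasDerivAt_gtilde τ Z hτ0 x).deriv
  intro x hx0 hxτ
  -- second derivative
  have hd2 : HasDerivAt (fun y => Z/8 + y/(8*τ) * gtilde τ Z y)
      (1/(8*τ) * gtilde τ Z x + x/(8*τ) * (Z/8 + x/(8*τ) * gtilde τ Z x)) x := by
    have hg := hasDerivAt_gtilde τ Z hτ0 x
    have h := (((hasDerivAt_id x).div_const (8*τ)).mul hg).const_add (Z/8)
    simpa using h
  rw [hd1]
  rw [hd2.deriv]
  -- now prove the inequality
  set g := gtilde τ Z x with hgdef
  have hg0 : 0 ≤ g := by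
    rw [hgdef]; unfold gtilde
    have h8 : 0 < Real.sqrt (8*τ) := Real.sqrt_pos.2 (by linarith)
    have := erf_nonneg (t := x / Real.sqrt (8*τ)) (by positivity)
    positivity
  -- key bound : g ≤ τ*Z/8 + x*g/8
  have key : g ≤ τ*Z/8 + x*g/8 := by
    rcases le_or_gt 8 x with h8 | h8
    · nlinarith
    · -- x < 8 : g ≤ Z*x/8 * exp(x^2/(16τ)) ≤ Z*e ≤ τ*Z/8
      have hc : 0 < Real.sqrt (8*τ) := Real.sqrt_pos.2 (by linarith)
      have hc2 : Real.sqrt (8*τ)^2 = 8*τ := Real.sq_sqrt (by linarith)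
      have herf : erf (x / Real.sqrt (8*τ)) ≤ x / Real.sqrt (8*τ) :=
        erf_le (by positivity)
      have hsq : Real.sqrt (τ/8) * (x / Real.sqrt (8*τ)) = x/8 := by
        rw [mul_div_assoc', mul_comm, mul_div_assoc, sqrt_ratio τ hτ0]
        ring
      have hexp : Real.exp (x^2/(16*τ)) ≤ Real.exp 1 := by
        apply Real.exp_le_exp.2
        rw [div_le_one (by positivity)]
        nlinarith
      have hgle : g ≤ Z * (x/8) * Real.exp (x^2/(16*τ)) := by
        rw [hgdef]; unfold gtilde
        have h1 : Real.sqrt (τ/8) * Z * erf (x / Real.sqrt (8*τ))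
            ≤ Real.sqrt (τ/8) * Z * (x / Real.sqrt (8*τ)) := by
          apply mul_le_mul_of_nonneg_left herf (by positivity)
        calc Real.sqrt (τ/8) * Z * erf (x / Real.sqrt (8*τ)) * Real.exp (x^2/(16*τ))
            ≤ Real.sqrt (τ/8) * Z * (x / Real.sqrt (8*τ)) * Real.exp (x^2/(16*τ)) := by
              apply mul_le_mul_of_nonneg_right h1 (Real.exp_nonneg _)
          _ = Z * (x/8) * Real.exp (x^2/(16*τ)) := by
              rw [mul_assoc (Real.sqrt (τ/8)), mul_comm (Real.sqrt (τ/8)),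
                mul_assoc Z, mul_comm (x / Real.sqrt (8*τ)), hsq]
      have : g ≤ Z * Real.exp 1 := by
        calc g ≤ Z * (x/8) * Real.exp (x^2/(16*τ)) := hgle
          _ ≤ Z * 1 * Real.exp 1 := by
              apply mul_le_mul (by nlinarith) hexp (Real.exp_nonneg _) (by positivity)
          _ = Z * Real.exp 1 := by ring
      nlinarith [Real.exp_pos 1]
  have hxg : 0 ≤ x/(8*τ) * g :=
    mul_nonneg (div_nonneg hx0 (by positivity)) hg0
  have hG : Z/8 ≤ Z/8 + x/(8*τ) * g := by linarith
  have hxr : x/(8*τ) ≤ 1/8 := by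
    rw [div_le_div_iff₀ (by positivity) (by norm_num)]; linarith
  -- goal: 1/(8τ)*g + x/(8τ)*G' ≤ 1/4 * G' where G' = Z/8 + x/(8τ)*g
  have hG'pos : 0 < Z/8 + x/(8*τ) * g := by nlinarith
  have step1 : 1/(8*τ) * g ≤ 1/8 * (Z/8 + x/(8*τ) * g) := by
    rw [div_mul_eq_mul_div, div_le_iff₀ (by positivity)]
    have : g ≤ τ * (Z/8 + x/(8*τ) * g) := by
      have : τ * (x/(8*τ) * g) = x*g/8 := by field_simp
      nlinarith
    nlinarith
  have step2 : x/(8*τ) * (Z/8 + x/(8*τ) * g) ≤ 1/8 * (Z/8 + x/(8*τ) * g) :=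
    mul_le_mul_of_nonneg_right hxr hG'pos.le
  linarith
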